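/- In the ring $R_n = \mathbb{Z}[d]/\langle \Delta_{n-1}(d)\rangle$ with $n \geq 3$, letting $\pi_k$ denote the image of $\Delta_k(d)$, one has $\pi_{n-2} \cdot \pi_b = \pi_{n-2-b}$ for all $0 \leq b \leq n-2$. -/
import Mathlib


open Polynomial

/-- Normalized Chebyshev polynomials of the second kind. -/
noncomputable def Delta : ℕ → Polynomial ℤ
  | 0 => 1
  | 1 => Polynomial.X
  | (k+2) => Polynomial.X * Delta (k+1) - Delta k

lemma Delta_zero : Delta 0 = 1 := by rw [Delta]

lemma Delta_one : Delta 1 = X := by rw [Delta]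

lemma Delta_rec (k : ℕ) : Delta (k + 2) = X * Delta (k + 1) - Delta k := by rw [Delta]

lemma Delta_key : ∀ b c : ℕ,
    Delta (b + c + 1) * Delta (b + 1) = Delta c + Delta b * Delta (b + c + 2) := by
  intro b
  induction b using Nat.twoStepInduction with
  | zero =>
    intro c
    simp only [Nat.zero_add]
    rw [Delta_rec c, Delta_zero, Delta_one]
    ring
  | one =>
    intro c
    simp only [show 1 + c + 1 = c + 2 from by omega, show 1 + c + 2 = c + 3 from by omega,
      show (1 : ℕ) + 1 = 2 from rfl]
    have r3 : Delta (c + 3) = X * Delta (c + 2) - Delta (c + 1) := by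
      have := Delta_rec (c + 1)
      simpa [show c + 1 + 2 = c + 3 from by omega, show c + 1 + 1 = c + 2 from by omega]
        using this
    rw [r3, Delta_rec c, Delta_one, show Delta 2 = X * X - 1 from by
      rw [Delta_rec 0, Delta_zero, Delta_one]]
    ring
  | more b ih1 ih2 =>
    intro c
    simp only [show b + 2 + c + 1 = b + c + 3 from by omega,
      show b + 2 + c + 2 = b + c + 4 from by omega,
      show b + 2 + 1 = b + 3 from by omega]
    have hA := ih2 (c + 1)
    simp only [show b + 1 + (c + 1) + 1 = b + c + 3 from by omega,
      show b + 1 + (c + 1) + 2 = b + c + 4 from by omega,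
      show b + 1 + 1 = b + 2 from by omega] at hA
    have hB := ih1 (c + 2)
    simp only [show b + (c + 2) + 1 = b + c + 3 from by omega,
      show b + (c + 2) + 2 = b + c + 4 from by omega] at hB
    have r3 : Delta (b + 3) = X * Delta (b + 2) - Delta (b + 1) := by
      have := Delta_rec (b + 1)
      simpa [show b + 1 + 2 = b + 3 from by omega, show b + 1 + 1 = b + 2 from by omega]
        using this
    have rc : Delta (c + 2) = X * Delta (c + 1) - Delta c := Delta_rec c
    have rb : Delta (b + 2) = X * Delta (b + 1) - Delta b := Delta_rec b
    calc Delta (b + c + 3) * Delta (b + 3)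
        = X * (Delta (b + c + 3) * Delta (b + 2)) -
            Delta (b + c + 3) * Delta (b + 1) := by rw [r3]; ring
      _ = X * (Delta (c + 1) + Delta (b + 1) * Delta (b + c + 4)) -
            (Delta (c + 2) + Delta b * Delta (b + c + 4)) := by rw [hA, hB]
      _ = Delta c + Delta (b + 2) * Delta (b + c + 4) := by rw [rc, rb]; ring

theorem fusion_rule_pi_top (n : ℕ) (hn : 3 ≤ n) (b : ℕ) (hb : b ≤ n - 2) :
    (Ideal.Quotient.mk (Ideal.span {Delta (n-1)}) (Delta (n-2))) *
      (Ideal.Quotient.mk (Ideal.span {Delta (n-1)}) (Delta b)) =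
    (Ideal.Quotient.mk (Ideal.span {Delta (n-1)}) (Delta (n-2-b))) := by
  rw [← map_mul, Ideal.Quotient.eq]
  rcases b with _ | b'
  · simp [Delta_zero]
  · set c := n - 2 - (b' + 1) with hc
    have h1 : n - 2 = b' + c + 1 := by omega
    have h2 : n - 1 = b' + c + 2 := by omega
    rw [h1, h2, Delta_key b' c]
    rw [Ideal.mem_span_singleton]
    exact ⟨Delta b', by ring⟩
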